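/- Let G be the flower graph obtained by identifying root vertices y_1,...,y_r of connected graphs K_1,...,K_r (with weight functions β_1,...,β_r) with a single vertex x carrying weight α(x). Then M_G^γ = Σ_{i=1}^r M_{K_i}^{β_i} + Σ_{i=1}^r M_{K_i}^{η_i}(y_i), where η_i = (Σ_{j≠i}|V_j| − r + 1)·β_i + α(x) + Σ_{j≠i} B_j and B_j = Σ_{v∈V_j} β_j(v). -/
import Mathlib


open Finset

private lemma key_sum (r : ℕ) (αx : ℝ) (n B b d E M : Fin r → ℝ) :
    (∑ j, E j) + (αx + ∑ j, b j) * (∑ i, d i)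
      + (∑ i, (M i - E i - b i * d i))
      + ∑ i, (d i * (((∑ j, B j) - B i) - ((∑ j, b j) - b i))
          + (n i - 1) * ((∑ j, E j) - E i))
    = (∑ i, M i)
      + ∑ i, ((((∑ j, n j) - n i) - (r : ℝ) + 1) * E i
          + (αx + ((∑ j, B j) - B i)) * d i) := by
  have hmul : ∀ (f : Fin r → ℝ) (c : ℝ), ∑ i, f i * c = (∑ i, f i) * c :=
    fun f c => (Finset.sum_mul _ _ _).symm
  have hmul' : ∀ (f : Fin r → ℝ) (c : ℝ), ∑ i, c * f i = c * ∑ i, f i :=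
    fun f c => (Finset.mul_sum _ _ _).symm
  simp only [sub_mul, mul_sub, add_mul, mul_add, Finset.sum_add_distrib,
    Finset.sum_sub_distrib, hmul, hmul', Finset.sum_const, card_univ,
    Fintype.card_fin, nsmul_eq_mul]
  have hc1 : ∑ x : Fin r, d x * b x = ∑ x : Fin r, b x * d x :=
    Finset.sum_congr rfl fun x _ => mul_comm _ _
  have hc2 : ∑ x : Fin r, d x * B x = ∑ x : Fin r, B x * d x :=
    Finset.sum_congr rfl fun x _ => mul_comm _ _
  rw [hc1, hc2]
  ring


/-- Moment of the flower graph obtained by identifying the roots `y₁,…,y_r` of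
`K₁,…,K_r` with a single vertex `x` of weight `α(x)`:
`M_G^γ = Σ_i M_{K_i}^{β_i} + Σ_i M_{K_i}^{η_i}(y_i)`, where
`η_i = (Σ_{j≠i}|V_j| − r + 1)·β_i + α(x) + Σ_{j≠i} B_j`. -/
theorem flower_moment {r : ℕ}
    {VG : Type*} {VK : Fin r → Type*} [Fintype VG] [∀ i, Fintype (VK i)]
    (K : ∀ i, SimpleGraph (VK i)) (G : SimpleGraph VG)
    (hK : ∀ i, (K i).Connected)
    (y : ∀ i, VK i) (iK : ∀ i, VK i → VG)
    (hiK : ∀ i, Function.Injective (iK i))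
    (hroot : ∀ i j, iK i (y i) = iK j (y j))
    (hcover : ∀ w : VG, ∃ i v, w = iK i v)
    (hdisj : ∀ i j v v', i ≠ j → iK i v = iK j v' → v = y i ∧ v' = y j)
    (hdK : ∀ i v v', G.dist (iK i v) (iK i v') = (K i).dist v v')
    (hcross : ∀ i j v v', i ≠ j →
      G.dist (iK i v) (iK j v') = (K i).dist v (y i) + (K j).dist (y j) v')
    (αx : ℝ) (hαx : 0 ≤ αx) (β : ∀ i, VK i → ℝ) (hβ : ∀ i v, 0 ≤ β i v)
    (γ : VG → ℝ)
    (hγK : ∀ i v, v ≠ y i → γ (iK i v) = β i v)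
    (hγc : ∀ i, γ (iK i (y i)) = αx + ∑ j, β j (y j)) :
    ∑ w : VG, ∑ w' : VG, γ w' * (G.dist w w' : ℝ) =
      (∑ i, ∑ v : VK i, ∑ v' : VK i, β i v' * ((K i).dist v v' : ℝ))
      + ∑ i, ∑ v : VK i,
          (((∑ j ∈ Finset.univ.erase i, (Fintype.card (VK j) : ℝ)) - r + 1) * β i v
            + αx + ∑ j ∈ Finset.univ.erase i, ∑ v' : VK j, β j v')
            * ((K i).dist v (y i) : ℝ) := by
  classical
  rcases Nat.eq_zero_or_pos r with hr | hr
  · subst hr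
    have hVG : IsEmpty VG := ⟨fun w => by rcases hcover w with ⟨i, -, -⟩; exact i.elim0⟩
    simp
  set i0 : Fin r := ⟨0, hr⟩ with hi0
  set c : VG := iK i0 (y i0) with hc
  have hcy : ∀ i, c = iK i (y i) := fun i => hroot i0 i
  have hnot : ∀ i (v : VK i), v ∈ (univ : Finset (VK i)).erase (y i) → v ≠ y i :=
    fun i v hv => (Finset.mem_erase.mp hv).1
  -- the scalar quantities
  set n : Fin r → ℝ := fun i => (Fintype.card (VK i) : ℝ) with hn
  set Bs : Fin r → ℝ := fun i => ∑ v, β i v with hBs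
  set bs : Fin r → ℝ := fun i => β i (y i) with hbs
  set ds : Fin r → ℝ := fun i => ∑ v, ((K i).dist v (y i) : ℝ) with hds
  set Es : Fin r → ℝ := fun i => ∑ v, β i v * ((K i).dist v (y i) : ℝ) with hEs
  set Ms : Fin r → ℝ := fun i => ∑ v, ∑ v', β i v' * ((K i).dist v v' : ℝ) with hMs
  -- decomposition of sums over VG
  have hsum : ∀ f : VG → ℝ,
      ∑ w : VG, f w = f c + ∑ i, ∑ v ∈ (univ : Finset (VK i)).erase (y i), f (iK i v) := by
    intro f
    have hpd : (↑(univ : Finset (Fin r)) : Set (Fin r)).PairwiseDisjoint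
        (fun i => ((univ : Finset (VK i)).erase (y i)).image (iK i)) := by
      intro i _ j _ hij
      simp only [Function.onFun, Finset.disjoint_left]
      intro w hwi hwj
      obtain ⟨v, hv, rfl⟩ := Finset.mem_image.mp hwi
      obtain ⟨v', hv', he⟩ := Finset.mem_image.mp hwj
      exact (hnot i v hv) (hdisj i j v v' hij he.symm).1
    have hcnot : c ∉ (univ : Finset (Fin r)).biUnion
        (fun i => ((univ : Finset (VK i)).erase (y i)).image (iK i)) := by
      intro hmem
      obtain ⟨i, -, hw⟩ := Finset.mem_biUnion.mp hmem
      obtain ⟨v, hv, he⟩ := Finset.mem_image.mp hw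
      exact hnot i v hv (hiK i (he.trans (hcy i)))
    have huniv : (univ : Finset VG) = insert c ((univ : Finset (Fin r)).biUnion
        (fun i => ((univ : Finset (VK i)).erase (y i)).image (iK i))) := by
      ext w
      constructor
      · intro _
        obtain ⟨i, v, rfl⟩ := hcover w
        by_cases hv : v = y i
        · exact Finset.mem_insert.mpr (Or.inl (by rw [hv, ← hcy i]))
        · exact Finset.mem_insert.mpr (Or.inr (Finset.mem_biUnion.mpr
            ⟨i, Finset.mem_univ i, Finset.mem_image.mpr
              ⟨v, Finset.mem_erase.mpr ⟨hv, Finset.mem_univ v⟩, rfl⟩⟩))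
      · intro _
        exact Finset.mem_univ w
    rw [huniv, Finset.sum_insert hcnot, Finset.sum_biUnion hpd]
    congr 1
    exact Finset.sum_congr rfl fun i _ =>
      Finset.sum_image (fun a _ b _ h => hiK i h)
  -- distance facts
  have hd1 : ∀ j v', G.dist c (iK j v') = (K j).dist (y j) v' := by
    intro j v'; rw [hcy j, hdK]
  have hd2 : ∀ i v, G.dist (iK i v) c = (K i).dist v (y i) := by
    intro i v; rw [hcy i, hdK]
  -- erase sums
  have erase_d : ∀ i, ∑ v ∈ (univ : Finset (VK i)).erase (y i),
      ((K i).dist v (y i) : ℝ) = ds i := by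
    intro i
    rw [hds]
    exact Finset.sum_erase _ (by simp [SimpleGraph.dist_self])
  have erase_E : ∀ j, ∑ v' ∈ (univ : Finset (VK j)).erase (y j),
      β j v' * ((K j).dist (y j) v' : ℝ) = Es j := by
    intro j
    rw [hEs, Finset.sum_erase _ (by simp [SimpleGraph.dist_self])]
    exact Finset.sum_congr rfl fun v _ => by rw [SimpleGraph.dist_comm]
  have erase_B : ∀ j, ∑ v' ∈ (univ : Finset (VK j)).erase (y j), β j v' = Bs j - bs j :=
    fun j => Finset.sum_erase_eq_sub (Finset.mem_univ _)
  have erase_card : ∀ i, (((univ : Finset (VK i)).erase (y i)).card : ℝ) = n i - 1 := by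
    intro i
    rw [Finset.card_erase_of_mem (Finset.mem_univ _), Finset.card_univ, hn]
    have h1 : 1 ≤ Fintype.card (VK i) := Fintype.card_pos_iff.mpr ⟨y i⟩
    push_cast [Nat.cast_sub h1]
    ring
  have M_split : ∀ i, ∑ v ∈ (univ : Finset (VK i)).erase (y i),
      ∑ v' ∈ (univ : Finset (VK i)).erase (y i), β i v' * ((K i).dist v v' : ℝ)
      = Ms i - Es i - bs i * ds i := by
    intro i
    have h1 : ∀ v : VK i, ∑ v' ∈ (univ : Finset (VK i)).erase (y i),
        β i v' * ((K i).dist v v' : ℝ)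
        = (∑ v' : VK i, β i v' * ((K i).dist v v' : ℝ))
          - β i (y i) * ((K i).dist v (y i) : ℝ) :=
      fun v => Finset.sum_erase_eq_sub (Finset.mem_univ _)
    simp only [h1]
    rw [Finset.sum_sub_distrib, Finset.sum_erase_eq_sub (Finset.mem_univ (y i)),
      ← Finset.mul_sum, erase_d i]
    have h2 : ∑ v' : VK i, β i v' * ((K i).dist (y i) v' : ℝ) = Es i := by
      rw [hEs]
      exact Finset.sum_congr rfl fun v _ => by rw [SimpleGraph.dist_comm]
    rw [h2, hMs, hbs]
  have off : ∀ i j, ∑ v ∈ (univ : Finset (VK i)).erase (y i),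
      ∑ v' ∈ (univ : Finset (VK j)).erase (y j),
        β j v' * (((K i).dist v (y i) : ℝ) + ((K j).dist (y j) v' : ℝ))
      = ds i * (Bs j - bs j) + (n i - 1) * Es j := by
    intro i j
    have h1 : ∀ v : VK i, ∑ v' ∈ (univ : Finset (VK j)).erase (y j),
        β j v' * (((K i).dist v (y i) : ℝ) + ((K j).dist (y j) v' : ℝ))
        = ((K i).dist v (y i) : ℝ) * (Bs j - bs j) + Es j := by
      intro v
      simp only [mul_add]
      rw [Finset.sum_add_distrib, erase_E j, ← Finset.sum_mul, erase_B j]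
      ring_nf
    simp only [h1]
    rw [Finset.sum_add_distrib, ← Finset.sum_mul, erase_d i, Finset.sum_const,
      nsmul_eq_mul, erase_card i]
  -- inner expansion
  have hinner : ∀ w : VG, ∑ w' : VG, γ w' * (G.dist w w' : ℝ)
      = γ c * (G.dist w c : ℝ) + ∑ j, ∑ v' ∈ (univ : Finset (VK j)).erase (y j),
          β j v' * (G.dist w (iK j v') : ℝ) := by
    intro w
    rw [hsum (fun w' => γ w' * (G.dist w w' : ℝ))]
    congr 1
    exact Finset.sum_congr rfl fun j _ => Finset.sum_congr rfl fun v' hv' => by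
      rw [hγK j v' (hnot j v' hv')]
  have hγc' : γ c = αx + ∑ j, bs j := by
    rw [hc, hγc i0, hbs]
  -- per-row computation
  have split_j : ∀ i (v : VK i), ∑ j, ∑ v' ∈ (univ : Finset (VK j)).erase (y j),
        β j v' * (G.dist (iK i v) (iK j v') : ℝ)
      = (∑ v' ∈ (univ : Finset (VK i)).erase (y i), β i v' * ((K i).dist v v' : ℝ))
        + ∑ j ∈ (univ : Finset (Fin r)).erase i, ∑ v' ∈ (univ : Finset (VK j)).erase (y j),
            β j v' * (((K i).dist v (y i) : ℝ) + ((K j).dist (y j) v' : ℝ)) := by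
    intro i v
    rw [← Finset.add_sum_erase _ _ (Finset.mem_univ i)]
    congr 1
    · exact Finset.sum_congr rfl fun v' _ => by rw [hdK]
    · refine Finset.sum_congr rfl fun j hj => Finset.sum_congr rfl fun v' _ => ?_
      have hij : i ≠ j := fun h => (Finset.mem_erase.mp hj).1 h.symm
      rw [hcross i j v v' hij]
      push_cast
      ring
  have hrow : ∀ i, ∑ v ∈ (univ : Finset (VK i)).erase (y i),
        (γ c * (G.dist (iK i v) c : ℝ)
          + ∑ j, ∑ v' ∈ (univ : Finset (VK j)).erase (y j),
              β j v' * (G.dist (iK i v) (iK j v') : ℝ))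
      = (αx + ∑ j, bs j) * ds i + (Ms i - Es i - bs i * ds i)
        + ∑ j ∈ (univ : Finset (Fin r)).erase i, (ds i * (Bs j - bs j) + (n i - 1) * Es j) := by
    intro i
    simp only [hd2, split_j]
    rw [Finset.sum_add_distrib, Finset.sum_add_distrib, ← add_assoc,
      ← Finset.mul_sum, erase_d i, hγc', M_split i, Finset.sum_comm]
    congr 1
    exact Finset.sum_congr rfl fun j hj => off i j
  -- assemble left-hand side
  have hL : ∑ w : VG, ∑ w' : VG, γ w' * (G.dist w w' : ℝ)
      = (∑ j, Es j) + (αx + ∑ j, bs j) * (∑ i, ds i)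
        + (∑ i, (Ms i - Es i - bs i * ds i))
        + ∑ i, (ds i * (((∑ j, Bs j) - Bs i) - ((∑ j, bs j) - bs i))
            + (n i - 1) * ((∑ j, Es j) - Es i)) := by
    calc ∑ w : VG, ∑ w' : VG, γ w' * (G.dist w w' : ℝ)
        = ∑ w : VG, (γ c * (G.dist w c : ℝ)
            + ∑ j, ∑ v' ∈ (univ : Finset (VK j)).erase (y j),
                β j v' * (G.dist w (iK j v') : ℝ)) :=
          Finset.sum_congr rfl fun w _ => hinner w
      _ = (γ c * (G.dist c c : ℝ)
            + ∑ j, ∑ v' ∈ (univ : Finset (VK j)).erase (y j),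
                β j v' * (G.dist c (iK j v') : ℝ))
          + ∑ i, ∑ v ∈ (univ : Finset (VK i)).erase (y i),
              (γ c * (G.dist (iK i v) c : ℝ)
                + ∑ j, ∑ v' ∈ (univ : Finset (VK j)).erase (y j),
                    β j v' * (G.dist (iK i v) (iK j v') : ℝ)) := hsum _
      _ = (0 + ∑ j, Es j)
          + ∑ i, ((αx + ∑ j, bs j) * ds i + (Ms i - Es i - bs i * ds i)
              + ∑ j ∈ (univ : Finset (Fin r)).erase i,
                  (ds i * (Bs j - bs j) + (n i - 1) * Es j)) := by
          congr 1
          · congr 1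
            · rw [SimpleGraph.dist_self]; simp
            · exact Finset.sum_congr rfl fun j _ => by
                simp only [hd1]; exact erase_E j
          · exact Finset.sum_congr rfl fun i _ => hrow i
      _ = (∑ j, Es j) + (αx + ∑ j, bs j) * (∑ i, ds i)
          + (∑ i, (Ms i - Es i - bs i * ds i))
          + ∑ i, (ds i * (((∑ j, Bs j) - Bs i) - ((∑ j, bs j) - bs i))
              + (n i - 1) * ((∑ j, Es j) - Es i)) := by
          rw [zero_add, Finset.sum_add_distrib, Finset.sum_add_distrib, ← Finset.mul_sum]
          have hcomb : ∀ i, ∑ j ∈ (univ : Finset (Fin r)).erase i,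
              (ds i * (Bs j - bs j) + (n i - 1) * Es j)
              = ds i * (((∑ j, Bs j) - Bs i) - ((∑ j, bs j) - bs i))
                + (n i - 1) * ((∑ j, Es j) - Es i) := by
            intro i
            rw [Finset.sum_add_distrib, ← Finset.mul_sum, ← Finset.mul_sum,
              Finset.sum_sub_distrib, Finset.sum_erase_eq_sub (Finset.mem_univ i),
              Finset.sum_erase_eq_sub (Finset.mem_univ i),
              Finset.sum_erase_eq_sub (Finset.mem_univ i)]
          rw [Finset.sum_congr rfl fun i _ => hcomb i]
          ring
  -- right-hand side
  have hR : (∑ i, ∑ v : VK i, ∑ v' : VK i, β i v' * ((K i).dist v v' : ℝ))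
      + ∑ i, ∑ v : VK i,
          (((∑ j ∈ Finset.univ.erase i, (Fintype.card (VK j) : ℝ)) - r + 1) * β i v
            + αx + ∑ j ∈ Finset.univ.erase i, ∑ v' : VK j, β j v')
            * ((K i).dist v (y i) : ℝ)
      = (∑ i, Ms i)
        + ∑ i, ((((∑ j, n j) - n i) - (r : ℝ) + 1) * Es i
            + (αx + ((∑ j, Bs j) - Bs i)) * ds i) := by
    congr 1
    refine Finset.sum_congr rfl fun i _ => ?_
    have e1 : ∑ j ∈ (univ : Finset (Fin r)).erase i, (Fintype.card (VK j) : ℝ)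
        = (∑ j, n j) - n i := Finset.sum_erase_eq_sub (Finset.mem_univ i)
    have e2 : ∑ j ∈ (univ : Finset (Fin r)).erase i, ∑ v' : VK j, β j v'
        = (∑ j, Bs j) - Bs i := Finset.sum_erase_eq_sub (Finset.mem_univ i)
    rw [e1, e2]
    calc ∑ v : VK i, ((((∑ j, n j) - n i) - (r : ℝ) + 1) * β i v
          + αx + ((∑ j, Bs j) - Bs i)) * ((K i).dist v (y i) : ℝ)
        = ∑ v : VK i, ((((∑ j, n j) - n i) - (r : ℝ) + 1) * (β i v * ((K i).dist v (y i) : ℝ))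
            + (αx + ((∑ j, Bs j) - Bs i)) * ((K i).dist v (y i) : ℝ)) :=
          Finset.sum_congr rfl fun v _ => by ring
      _ = (((∑ j, n j) - n i) - (r : ℝ) + 1) * Es i
            + (αx + ((∑ j, Bs j) - Bs i)) * ds i := by
          rw [Finset.sum_add_distrib, ← Finset.mul_sum, ← Finset.mul_sum]
  rw [hL, hR]
  exact key_sum r αx n Bs bs ds Es Ms
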